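/- Let D=(V,E) be a finite connected graph with edge weights c_e ≥ 1, H a positive height function on D, and E_fix(H) the set of edges with max of the two endpoint values ≥ 3. Define the Ising weight of σ: 𝒱 → {±1} on the quotient graph 𝒟 = D/∼ (where ∼ is E_fix-connectivity) as W_Ising(σ) = ∏_{⟨u,v⟩ ∈ E} c_e^{𝟙{σ(u)=σ(v)}}. Then there is a constant K = K(D,H) > 0 such that for every height function h with |h| = H, the height weight W(h) = ∏_{⟨v,w⟩∈E} c_e^{𝟙{h(v)=h(w)}} satisfies W(h) = K · W_Ising(σ_h), where σ_h is the sign function of h on the components of E_fix(H). -/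

import Mathlib

/-- A height function: odd-valued and changing by at most 2 along edges. -/
def IsHeight {V : Type*} (G : SimpleGraph V) (h : V → ℤ) : Prop :=
  (∀ v, Odd (h v)) ∧ ∀ v w, G.Adj v w → |h v - h w| ≤ 2

set_option maxHeartbeats 1000000 in
theorem stmt_3 {V : Type*} [Fintype V] [DecidableEq V] (G : SimpleGraph V)
    [DecidableRel G.Adj] (hconn : G.Connected)
    (c : Sym2 V → ℝ) (hc : ∀ e ∈ G.edgeSet, 1 ≤ c e)
    (H : V → ℤ) (Hheight : IsHeight G H) (Hpos : ∀ v, 1 ≤ H v) :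
    ∃ K : ℝ, 0 < K ∧
      ∀ h : V → ℤ, IsHeight G h → (∀ v, |h v| = H v) →
        (∏ e ∈ G.edgeFinset, if ∀ v ∈ e, ∀ w ∈ e, h v = h w then c e else 1)
          = K * ∏ e ∈ G.edgeFinset,
              if ∀ v ∈ e, ∀ w ∈ e, (0 < h v ↔ 0 < h w) then c e else 1 := by
  classical
  set B : Sym2 V → ℝ := fun e =>
    if (∀ v ∈ e, ∀ w ∈ e, H v = H w) then 1 else c e with hB
  have hB1 : ∀ e ∈ G.edgeFinset, 1 ≤ B e := by
    intro e he
    simp only [hB]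
    split
    · exact le_refl 1
    · exact hc e (SimpleGraph.mem_edgeFinset.mp he)
  set P := ∏ e ∈ G.edgeFinset, B e with hP
  have hP1 : 1 ≤ P := by
    rw [hP]
    calc (1:ℝ) = ∏ _e ∈ G.edgeFinset, 1 := by simp
      _ ≤ _ := Finset.prod_le_prod (fun i _ => by norm_num) hB1
  have hPne : P ≠ 0 := by linarith
  refine ⟨P⁻¹, by positivity, ?_⟩
  intro h hh habs
  have key : ∀ e ∈ G.edgeFinset,
      (if ∀ v ∈ e, ∀ w ∈ e, (0 < h v ↔ 0 < h w) then c e else 1)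
        = B e * (if ∀ v ∈ e, ∀ w ∈ e, h v = h w then c e else 1) := by
    intro e he
    induction e with
    | _ v w =>
      have hadj : G.Adj v w := by simpa using he
      have hd := abs_le.mp (hh.2 v w hadj)
      have hv := habs v; have hw := habs w
      have hv1 := Hpos v; have hw1 := Hpos w
      obtain ⟨a, ha⟩ := Hheight.1 v
      obtain ⟨b, hb⟩ := Hheight.1 w
      have hv' : h v = H v ∨ h v = -H v := (abs_eq (by linarith)).mp hv
      have hw' : h w = H w ∨ h w = -H w := (abs_eq (by linarith)).mp hw
      have c1 : (∀ x ∈ s(v, w), ∀ y ∈ s(v, w),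
          (0 < h x ↔ 0 < h y)) ↔ (0 < h v ↔ 0 < h w) := by
        constructor
        · intro hp; exact hp v (by simp) w (by simp)
        · intro hp x hx y hy
          rcases Sym2.mem_iff.mp hx with rfl | rfl <;>
            rcases Sym2.mem_iff.mp hy with rfl | rfl <;> tauto
      have c2 : (∀ x ∈ s(v, w), ∀ y ∈ s(v, w),
          h x = h y) ↔ h v = h w := by
        constructor
        · intro hp; exact hp v (by simp) w (by simp)
        · intro hp x hx y hy
          rcases Sym2.mem_iff.mp hx with rfl | rfl <;>
            rcases Sym2.mem_iff.mp hy with rfl | rfl <;> omega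
      have c3 : (∀ x ∈ s(v, w), ∀ y ∈ s(v, w),
          H x = H y) ↔ H v = H w := by
        constructor
        · intro hp; exact hp v (by simp) w (by simp)
        · intro hp x hx y hy
          rcases Sym2.mem_iff.mp hx with rfl | rfl <;>
            rcases Sym2.mem_iff.mp hy with rfl | rfl <;> omega
      simp only [hB]
      rw [if_congr c1 rfl rfl, if_congr c2 rfl rfl, if_congr c3 rfl rfl]
      by_cases hr : H v = H w
      · rw [if_pos hr, one_mul]
        exact if_congr (by omega) rfl rfl
      · rw [if_neg hr]
        have hs : 0 < h v ↔ 0 < h w := by omega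
        have hq : ¬ h v = h w := by omega
        rw [if_pos hs, if_neg hq, mul_one]
  rw [Finset.prod_congr rfl key, Finset.prod_mul_distrib, ← hP,
    inv_mul_cancel_left₀ hPne]
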